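/- Let m > 0 and M > 0, and let g : [0,∞) → ℝ be a C³ solution of g''' + ((m+1)/2)·g·g'' + m·(1 - (g')²) + M·(1 - g') = 0 with g'(0) = 1, g''(0) > 0, and lim_{t→∞} g'(t) = 1. Then a contradiction arises; i.e., no such solution exists. -/

import Mathlib

open Filter

theorem stmt_1 (m M : ℝ) (hm : 0 < m) (hM : 0 < M) (g : ℝ → ℝ)
    (hg : ContDiff ℝ 3 g)
    (hode : ∀ t : ℝ, 0 ≤ t →
      deriv (deriv (deriv g)) t + (m + 1) / 2 * g t * deriv (deriv g) t
        + m * (1 - (deriv g t) ^ 2) + M * (1 - deriv g t) = 0)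
    (h0 : deriv g 0 = 1) (h1 : 0 < deriv (deriv g) 0)
    (hlim : Tendsto (deriv g) atTop (nhds 1)) : False := by
  -- regularity
  have hg2 : ContDiff ℝ 2 (deriv g) := by
    have : ContDiff ℝ (2 + 1) g := by norm_num; exact hg
    exact ((contDiff_succ_iff_deriv.mp this).2.2 : _)
  have hg1 : ContDiff ℝ 1 (deriv (deriv g)) := by
    have : ContDiff ℝ (1 + 1) (deriv g) := by norm_num; exact hg2
    exact ((contDiff_succ_iff_deriv.mp this).2.2 : _)
  have hg0 : Continuous (deriv (deriv (deriv g))) := by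
    have : ContDiff ℝ (0 + 1) (deriv (deriv g)) := by norm_num; exact hg1
    exact ((contDiff_succ_iff_deriv.mp this).2.2 : ContDiff ℝ 0 _).continuous
  have hcont1 : Continuous (deriv g) := hg2.continuous
  have hcont2 : Continuous (deriv (deriv g)) := hg1.continuous
  -- step 1: ∃ ε > 0, g' ε > 1
  have hda : HasDerivAt (deriv g) (deriv (deriv g) 0) 0 :=
    (hg2.differentiable two_ne_zero 0).hasDerivAt
  have hslope := hasDerivAt_iff_tendsto_slope.mp hda
  have hev : ∀ᶠ y in nhdsWithin (0:ℝ) (Set.Ioi 0), 0 < slope (deriv g) 0 y := by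
    have h1' : ∀ᶠ y in nhdsWithin (0:ℝ) {(0:ℝ)}ᶜ, 0 < slope (deriv g) 0 y :=
      hslope (eventually_gt_nhds h1)
    exact h1'.filter_mono (nhdsWithin_mono _ (by
      intro x hx; simp only [Set.mem_compl_iff, Set.mem_singleton_iff]
      exact ne_of_gt hx))
  obtain ⟨ε, hε0, hεs⟩ : ∃ ε > (0:ℝ), 0 < slope (deriv g) 0 ε := by
    rcases (hev.and self_mem_nhdsWithin).exists with ⟨ε, h₁, h₂⟩
    exact ⟨ε, h₂, h₁⟩
  have hc : 1 < deriv g ε := by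
    have : slope (deriv g) 0 ε = (deriv g ε - 1) / ε := by
      simp [slope, h0, div_eq_inv_mul]
    rw [this] at hεs
    have := (div_pos_iff.mp hεs)
    rcases this with ⟨h, _⟩ | ⟨_, h⟩
    · linarith
    · linarith
  set c := deriv g ε with hcdef
  -- step 2: eventually g' < c
  have hevc : ∀ᶠ t in atTop, deriv g t < c := hlim (eventually_lt_nhds hc)
  obtain ⟨T, hT⟩ := hevc.exists_forall_of_atTop
  set T₁ := max T ε with hT₁def
  have hT₁ε : ε ≤ T₁ := le_max_right _ _
  have hT₁T : T ≤ T₁ := le_max_left _ _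
  -- step 3: max on [0, T₁]
  obtain ⟨t₀, ht₀mem, ht₀max⟩ :=
    (isCompact_Icc (a := (0:ℝ)) (b := T₁)).exists_isMaxOn
      ⟨0, Set.left_mem_Icc.mpr (le_trans hε0.le hT₁ε)⟩ hcont1.continuousOn
  have hεmem : ε ∈ Set.Icc (0:ℝ) T₁ := ⟨hε0.le, hT₁ε⟩
  have ht₀c : c ≤ deriv g t₀ := ht₀max hεmem
  have ht₀gt : 1 < deriv g t₀ := lt_of_lt_of_le hc ht₀c
  have ht₀pos : 0 < t₀ := by
    rcases lt_or_eq_of_le ht₀mem.1 with h | h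
    · exact h
    · exfalso; rw [← h, h0] at ht₀gt; linarith
  -- global max on [0, ∞)
  have hglob : ∀ t : ℝ, 0 ≤ t → deriv g t ≤ deriv g t₀ := by
    intro t ht
    by_cases h : t ≤ T₁
    · exact ht₀max ⟨ht, h⟩
    · have : deriv g t < c := hT t (le_trans hT₁T (le_of_not_ge h))
      linarith
  -- local max
  have hloc : IsLocalMax (deriv g) t₀ := by
    filter_upwards [Ioi_mem_nhds ht₀pos] with t ht
    exact hglob t (le_of_lt ht)
  have hdd0 : deriv (deriv g) t₀ = 0 := hloc.deriv_eq_zero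
  -- g''' t₀ > 0
  have h3pos : 0 < deriv (deriv (deriv g)) t₀ := by
    have := hode t₀ ht₀pos.le
    rw [hdd0] at this
    nlinarith [sq_nonneg (deriv g t₀ - 1), ht₀gt]
  -- continuity: g''' > 0 near t₀
  have hev3 : ∀ᶠ t in nhds t₀, 0 < deriv (deriv (deriv g)) t :=
    (hg0.continuousAt (x := t₀)).eventually (eventually_gt_nhds h3pos)
  obtain ⟨δ, hδ0, hδ⟩ := Metric.eventually_nhds_iff.mp hev3
  set t₁ := t₀ + δ / 2 with ht₁def
  have ht₀t₁ : t₀ < t₁ := by simp [ht₁def]; linarith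
  -- g'' strictly increasing on [t₀, t₁]
  have hmono2 : StrictMonoOn (deriv (deriv g)) (Set.Icc t₀ t₁) := by
    apply strictMonoOn_of_deriv_pos (convex_Icc _ _) hcont2.continuousOn
    intro x hx
    rw [interior_Icc] at hx
    apply hδ
    rw [Real.dist_eq, abs_lt]
    constructor <;> [linarith [hx.1] ; linarith [hx.2, ht₁def ▸ hx.2]]
  have hpos2 : ∀ x ∈ Set.Ioo t₀ t₁, 0 < deriv (deriv g) x := by
    intro x hx
    have := hmono2 (Set.left_mem_Icc.mpr ht₀t₁.le) ⟨hx.1.le, hx.2.le⟩ hx.1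
    rw [hdd0] at this
    exact this
  have hmono1 : StrictMonoOn (deriv g) (Set.Icc t₀ t₁) := by
    apply strictMonoOn_of_deriv_pos (convex_Icc _ _) hcont1.continuousOn
    intro x hx
    rw [interior_Icc] at hx
    exact hpos2 x hx
  have h11 : deriv g t₀ < deriv g t₁ :=
    hmono1 (Set.left_mem_Icc.mpr ht₀t₁.le) (Set.right_mem_Icc.mpr ht₀t₁.le) ht₀t₁
  have : deriv g t₁ ≤ deriv g t₀ := hglob t₁ (by linarith)
  linarith
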